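/- Let G be a subgroup of Sₙ acting on the set of 2-subsets of {1,...,n}, with n ≥ 5. If G is transitive of rank 3 on 2-subsets, then G is 4-homogeneous on {1,...,n} (acts transitively on 4-subsets). -/

import Mathlib

/-- Two pairs of 2-subsets are in the same `G`-orbit of the diagonal action. -/
def SameOrbitOnPairs {n : ℕ} (G : Subgroup (Equiv.Perm (Fin n)))
    (p q : Finset (Fin n) × Finset (Fin n)) : Prop :=
  ∃ g ∈ G, p.1.image g = q.1 ∧ p.2.image g = q.2

set_option maxHeartbeats 1000000 in
/-- If `G ≤ Sₙ` (`n ≥ 5`) is transitive of rank 3 on the 2-subsets of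
`{1,…,n}` — i.e. transitive on 2-subsets with exactly three orbits on ordered
pairs of 2-subsets — then `G` is 4-homogeneous: it is transitive on 4-subsets. -/
theorem rank3_on_pairs_imp_four_homogeneous {n : ℕ} (hn : 5 ≤ n)
    (G : Subgroup (Equiv.Perm (Fin n)))
    (htrans : ∀ s t : Finset (Fin n), s.card = 2 → t.card = 2 →
      ∃ g ∈ G, s.image g = t)
    (hrank3 : ∃ p₁ p₂ p₃ : Finset (Fin n) × Finset (Fin n),
      (p₁.1.card = 2 ∧ p₁.2.card = 2) ∧ (p₂.1.card = 2 ∧ p₂.2.card = 2) ∧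
      (p₃.1.card = 2 ∧ p₃.2.card = 2) ∧
      ¬ SameOrbitOnPairs G p₁ p₂ ∧ ¬ SameOrbitOnPairs G p₁ p₃ ∧
      ¬ SameOrbitOnPairs G p₂ p₃ ∧
      ∀ q : Finset (Fin n) × Finset (Fin n), q.1.card = 2 → q.2.card = 2 →
        SameOrbitOnPairs G p₁ q ∨ SameOrbitOnPairs G p₂ q ∨ SameOrbitOnPairs G p₃ q) :
    ∀ s t : Finset (Fin n), s.card = 4 → t.card = 4 → ∃ g ∈ G, s.image g = t := by
  -- Symmetry and transitivity of the orbit relation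
  have hsymm : ∀ p q, SameOrbitOnPairs G p q → SameOrbitOnPairs G q p := by
    rintro p q ⟨g, hg, h1, h2⟩
    refine ⟨g⁻¹, G.inv_mem hg, ?_, ?_⟩
    · rw [← h1, Finset.image_image]; ext x; simp
    · rw [← h2, Finset.image_image]; ext x; simp
  have htrns : ∀ p q r, SameOrbitOnPairs G p q → SameOrbitOnPairs G q r →
      SameOrbitOnPairs G p r := by
    rintro p q r ⟨g, hg, h1, h2⟩ ⟨g', hg', h1', h2'⟩
    refine ⟨g' * g, G.mul_mem hg' hg, ?_, ?_⟩
    · rw [← h1', ← h1, Finset.image_image, ← Equiv.Perm.coe_mul]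
    · rw [← h2', ← h2, Finset.image_image, ← Equiv.Perm.coe_mul]
  -- Orbit relation preserves the cardinality of the intersection
  have hinv : ∀ p q, SameOrbitOnPairs G p q →
      (p.1 ∩ p.2).card = (q.1 ∩ q.2).card := by
    rintro p q ⟨g, hg, h1, h2⟩
    rw [← h1, ← h2, ← Finset.image_inter _ _ g.injective,
      Finset.card_image_of_injective _ g.injective]
  -- Four distinct points
  obtain ⟨a, b, c, d, hab, hac, had, hbc, hbd, hcd⟩ :
      ∃ a b c d : Fin n, a ≠ b ∧ a ≠ c ∧ a ≠ d ∧ b ≠ c ∧ b ≠ d ∧ c ≠ d := by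
    refine ⟨⟨0, by omega⟩, ⟨1, by omega⟩, ⟨2, by omega⟩, ⟨3, by omega⟩,
      ?_, ?_, ?_, ?_, ?_, ?_⟩ <;> simp [Fin.ext_iff]
  have cab : ({a, b} : Finset (Fin n)).card = 2 := Finset.card_pair hab
  have cbc : ({b, c} : Finset (Fin n)).card = 2 := Finset.card_pair hbc
  have ccd : ({c, d} : Finset (Fin n)).card = 2 := Finset.card_pair hcd
  have int2 : (({a, b} : Finset (Fin n)) ∩ {a, b}).card = 2 := by
    rw [Finset.inter_self]; exact cab
  have int1 : (({a, b} : Finset (Fin n)) ∩ {b, c}).card = 1 := by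
    have : ({a, b} : Finset (Fin n)) ∩ {b, c} = {b} := by
      rw [Finset.insert_inter_of_notMem (by simp [hab, hac]),
        Finset.singleton_inter_of_mem (by simp)]
    rw [this, Finset.card_singleton]
  have int0 : (({a, b} : Finset (Fin n)) ∩ {c, d}).card = 0 := by
    rw [Finset.card_eq_zero, Finset.eq_empty_iff_forall_notMem]
    intro x hx
    simp only [Finset.mem_inter, Finset.mem_insert, Finset.mem_singleton] at hx
    rcases hx with ⟨rfl | rfl, h2 | h2⟩ <;> simp_all
  obtain ⟨p₁, p₂, p₃, ⟨c11, c12⟩, ⟨c21, c22⟩, ⟨c31, c32⟩, h12, h13, h23, hcover⟩ :=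
    hrank3
  -- among the representatives, intersection sizes 2, 1, 0 each occur
  have hd2 : (p₁.1 ∩ p₁.2).card = 2 ∨ (p₂.1 ∩ p₂.2).card = 2 ∨
      (p₃.1 ∩ p₃.2).card = 2 := by
    rcases hcover ⟨{a, b}, {a, b}⟩ cab cab with h | h | h
    · exact Or.inl (by rw [hinv _ _ h]; exact int2)
    · exact Or.inr (Or.inl (by rw [hinv _ _ h]; exact int2))
    · exact Or.inr (Or.inr (by rw [hinv _ _ h]; exact int2))
  have hd1 : (p₁.1 ∩ p₁.2).card = 1 ∨ (p₂.1 ∩ p₂.2).card = 1 ∨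
      (p₃.1 ∩ p₃.2).card = 1 := by
    rcases hcover ⟨{a, b}, {b, c}⟩ cab cbc with h | h | h
    · exact Or.inl (by rw [hinv _ _ h]; exact int1)
    · exact Or.inr (Or.inl (by rw [hinv _ _ h]; exact int1))
    · exact Or.inr (Or.inr (by rw [hinv _ _ h]; exact int1))
  -- any two disjoint pairs lie in the same orbit
  have key : ∀ q q' : Finset (Fin n) × Finset (Fin n),
      q.1.card = 2 → q.2.card = 2 → (q.1 ∩ q.2).card = 0 →
      q'.1.card = 2 → q'.2.card = 2 → (q'.1 ∩ q'.2).card = 0 →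
      SameOrbitOnPairs G q q' := by
    intro q q' hq1 hq2 hq0 hq1' hq2' hq0'
    rcases hcover q hq1 hq2 with h | h | h <;>
      rcases hcover q' hq1' hq2' with h' | h' | h' <;>
      first
        | exact htrns _ _ _ (hsymm _ _ h) h'
        | (have e1 := hinv _ _ h
           have e2 := hinv _ _ h'
           rw [hq0] at e1
           rw [hq0'] at e2
           rcases hd2 with h2 | h2 | h2 <;> rcases hd1 with h1 | h1 | h1 <;> omega)
  -- now split 4-sets into disjoint 2-subsets
  intro s t hs ht
  obtain ⟨s₁, hs₁sub, hs₁⟩ := Finset.exists_subset_card_eq (s := s) (n := 2) (by omega)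
  obtain ⟨t₁, ht₁sub, ht₁⟩ := Finset.exists_subset_card_eq (s := t) (n := 2) (by omega)
  have hs₂ : (s \ s₁).card = 2 := by rw [Finset.card_sdiff_of_subset hs₁sub]; omega
  have ht₂ : (t \ t₁).card = 2 := by rw [Finset.card_sdiff_of_subset ht₁sub]; omega
  have hsd : (s₁ ∩ (s \ s₁)).card = 0 := by
    simp [Finset.inter_sdiff_self]
  have htd : (t₁ ∩ (t \ t₁)).card = 0 := by
    simp [Finset.inter_sdiff_self]
  obtain ⟨g, hg, him1, him2⟩ :=
    key ⟨s₁, s \ s₁⟩ ⟨t₁, t \ t₁⟩ hs₁ hs₂ hsd ht₁ ht₂ htd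
  refine ⟨g, hg, ?_⟩
  rw [← Finset.union_sdiff_of_subset hs₁sub, Finset.image_union]
  simp only at him1 him2
  rw [him1, him2, Finset.union_sdiff_of_subset ht₁sub]
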